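/- If f : E → ℝ is convex with minimizer x⋆ and 0 lies in the interior of the subdifferential ∂f(x⋆) (sharp minimum), then there exists ρ > 0 such that for all g with ‖g‖ < ρ, the conjugate function satisfies f*(g) = g·x⋆ - f(x⋆); i.e., f* is linear on a neighborhood of 0. -/
import Mathlib

open scoped RealInnerProductSpace
open Filter

variable {E : Type*} [NormedAddCommGroup E] [InnerProductSpace ℝ E] [FiniteDimensional ℝ E]

/-- Fenchel conjugate `f*(g) = sup_x (g·x - f x)` (real-valued supremum). -/
noncomputable def conj (f : E → ℝ) (g : E) : ℝ := ⨆ x, (⟪g, x⟫ - f x)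

/-- Subdifferential of a finite convex function. -/
def subdiff (f : E → ℝ) (x : E) : Set E := {g | ∀ y, f y - f x ≥ ⟪g, y - x⟫}

/-- Epigraph of the conjugate function: `{(μ, g) : μ ≥ f*(g)}` (including the
domain condition, correct even where `f* = +∞`). -/
def epiConj (f : E → ℝ) : Set (ℝ × E) := {p | ∀ x, ⟪p.2, x⟫ - f x ≤ p.1}

/-- Subdifferential of the conjugate `f*` at `g₀`: `x` with
`f*(g) ≥ f*(g₀) + x·(g - g₀)` for all `g` (stated via upper bounds `μ ≥ f*(g)`). -/
def subdiffConj (f : E → ℝ) (g₀ : E) : Set E :=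
  {x | ∀ p ∈ epiConj f, p.1 - conj f g₀ ≥ ⟪x, p.2 - g₀⟫}

/-- Directional derivative of the conjugate: `∂f*(g₀; d) = sup_{x ∈ ∂f*(g₀)} x·d`. -/
noncomputable def dirDConj (f : E → ℝ) (g₀ d : E) : ℝ :=
  sSup ((fun x => ⟪x, d⟫) '' subdiffConj f g₀)

/-- Directional derivative of a finite convex function `h`:
`∂h(g; d) = sup_{x ∈ ∂h(g)} x·d`. -/
noncomputable def dirD (h : E → ℝ) (g d : E) : ℝ :=
  sSup ((fun x => ⟪x, d⟫) '' subdiff h g)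

/-- sharp minimum implies the conjugate is linear near 0. -/
theorem conj_linear_near_zero_of_sharp_min
    (f : E → ℝ) (hf : ConvexOn ℝ Set.univ f) (xs : E) (hmin : ∀ y, f xs ≤ f y)
    (hsharp : (0 : E) ∈ interior (subdiff f xs)) :
    ∃ ρ > (0 : ℝ), ∀ g : E, ‖g‖ < ρ → conj f g = ⟪g, xs⟫ - f xs := by
  obtain ⟨ρ, hρ, hball⟩ := Metric.mem_nhds_iff.mp (mem_interior_iff_mem_nhds.mp hsharp)
  refine ⟨ρ, hρ, fun g hg => ?_⟩
  have hg' : g ∈ subdiff f xs := hball (by simpa [Metric.mem_ball] using hg)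
  have key : ∀ x, ⟪g, x⟫ - f x ≤ ⟪g, xs⟫ - f xs := by
    intro x
    have := hg' x
    rw [inner_sub_right] at this
    linarith
  refine le_antisymm (ciSup_le key) ?_
  exact le_ciSup ⟨⟪g, xs⟫ - f xs, Set.forall_mem_range.mpr key⟩ xs
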